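/- The graph 3C₃ (three vertex-disjoint triangles on 9 vertices) is uniquely embeddable in its complement: it admits an embedding, and for any two embeddings σ₁, σ₂ the graphs G ⊕ σ₁(G) and G ⊕ σ₂(G) are isomorphic. In particular, in any embedding the three image triangles each use exactly one vertex from each of the three original triangles. -/

import Mathlib

open SimpleGraph

/-- The cycle graph on `ZMod n`: `i` and `j` adjacent iff they differ by one. -/
def CycGraph (n : ℕ) : SimpleGraph (ZMod n) where
  Adj i j := i ≠ j ∧ (i = j + 1 ∨ j = i + 1)
  symm := by constructor; rintro i j ⟨hne, h⟩; exact ⟨hne.symm, h.symm⟩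
  loopless := by constructor; rintro i ⟨hne, _⟩; exact hne rfl

/-- `σ` is an embedding of `G` into its complement. -/
def IsGraphEmbedding {V : Type*} (G : SimpleGraph V) (σ : Equiv.Perm V) : Prop :=
  ∀ x y, G.Adj x y → ¬ G.Adj (σ x) (σ y)

/-- The edge sum `G ⊕ σ(G)`. -/
def EdgeSum {V : Type*} (G : SimpleGraph V) (σ : Equiv.Perm V) : SimpleGraph V :=
  G ⊔ G.map σ.toEmbedding

/-- Vertex-disjoint union of two graphs. -/
def DisjUnion {α β : Type*} (G : SimpleGraph α) (H : SimpleGraph β) :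
    SimpleGraph (α ⊕ β) where
  Adj x y :=
    (∃ a b, x = Sum.inl a ∧ y = Sum.inl b ∧ G.Adj a b) ∨
    (∃ a b, x = Sum.inr a ∧ y = Sum.inr b ∧ H.Adj a b)
  symm := by
    constructor
    rintro x y (⟨a, b, rfl, rfl, h⟩ | ⟨a, b, rfl, rfl, h⟩)
    · exact Or.inl ⟨b, a, rfl, rfl, h.symm⟩
    · exact Or.inr ⟨b, a, rfl, rfl, h.symm⟩
  loopless := by
    constructor
    rintro x (⟨a, b, rfl, h, hadj⟩ | ⟨a, b, rfl, h, hadj⟩) <;>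
      · cases h; exact hadj.ne rfl

/-- The disjoint union of `k` triangles `kC₃`, on vertex set `Fin k × ZMod 3`. -/
def Triangles (k : ℕ) : SimpleGraph (Fin k × ZMod 3) where
  Adj x y := x.1 = y.1 ∧ x.2 ≠ y.2
  symm := by constructor; rintro x y ⟨h1, h2⟩; exact ⟨h1.symm, h2.symm⟩
  loopless := by constructor; rintro x ⟨_, h⟩; exact h rfl

/-- Auxiliary: the 3×3 rook graph. -/
def RookG : SimpleGraph (Fin 3 × Fin 3) where
  Adj x y := x ≠ y ∧ (x.1 = y.1 ∨ x.2 = y.2)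
  symm := by constructor; rintro x y ⟨h1, h2⟩; exact ⟨h1.symm, by tauto⟩
  loopless := by constructor; rintro x ⟨h, _⟩; exact h rfl

lemma triangles_adj (x y : Fin 3 × ZMod 3) :
    (Triangles 3).Adj x y ↔ x.1 = y.1 ∧ x.2 ≠ y.2 := Iff.rfl

lemma keyA {σ : Equiv.Perm (Fin 3 × ZMod 3)} (h : IsGraphEmbedding (Triangles 3) σ) :
    ∀ x y : Fin 3 × ZMod 3, x.1 = y.1 → x ≠ y → (σ x).1 ≠ (σ y).1 := by
  intro x y h1 hne hcon
  have hxy : (Triangles 3).Adj x y := by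
    refine ⟨h1, ?_⟩
    intro h2
    exact hne (Prod.ext h1 h2)
  exact h x y hxy ⟨hcon, fun h2 => (σ.injective.ne hne) (Prod.ext hcon h2)⟩

def phi (σ : Equiv.Perm (Fin 3 × ZMod 3)) (v : Fin 3 × ZMod 3) : Fin 3 × Fin 3 :=
  (v.1, (σ.symm v).1)

lemma iso_rook {σ : Equiv.Perm (Fin 3 × ZMod 3)} (h : IsGraphEmbedding (Triangles 3) σ) :
    Nonempty (EdgeSum (Triangles 3) σ ≃g RookG) := by
  have hinj : Function.Injective (phi σ) := by
    intro u v huv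
    by_contra hne
    simp only [phi, Prod.mk.injEq] at huv
    obtain ⟨h1, h2⟩ := huv
    exact keyA h (σ.symm u) (σ.symm v) h2 (σ.symm.injective.ne hne) (by simpa using h1)
  have hbij : Function.Bijective (phi σ) :=
    (Fintype.bijective_iff_injective_and_card _).2 ⟨hinj, by simp⟩
  refine ⟨⟨Equiv.ofBijective (phi σ) hbij, ?_⟩⟩
  intro u v
  show RookG.Adj (phi σ u) (phi σ v) ↔ (EdgeSum (Triangles 3) σ).Adj u v
  constructor
  · rintro ⟨hne, h1 | h2⟩
    · have hne' : u ≠ v := fun e => hne (congrArg (phi σ) e)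
      exact Or.inl ⟨h1, fun e => hne' (Prod.ext h1 e)⟩
    · have hne' : σ.symm u ≠ σ.symm v :=
        fun e => hne (congrArg (phi σ) (σ.symm.injective e))
      refine Or.inr ⟨fun e => hne' (congrArg σ.symm e), σ.symm u, σ.symm v, ⟨h2, fun e => hne' (Prod.ext h2 e)⟩, by simp, by simp⟩
  · rintro (⟨h1, h2⟩ | ⟨-, a, b, hab, ha, hb⟩)
    · exact ⟨hinj.ne (fun e => h2 (congrArg Prod.snd e)), Or.inl h1⟩
    · have ha' : σ.symm u = a := by rw [← ha]; simp
      have hb' : σ.symm v = b := by rw [← hb]; simp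
      have hne : u ≠ v := fun e => hab.2 (by rw [← ha', ← hb', e])
      exact ⟨hinj.ne hne, Or.inr (by show (σ.symm u).1 = (σ.symm v).1; rw [ha', hb']; exact hab.1)⟩

instance : DecidableRel (Triangles 3).Adj := fun x y =>
  decidable_of_iff (x.1 = y.1 ∧ x.2 ≠ y.2) Iff.rfl

/-- `3C₃` is uniquely embeddable: it admits an embedding, any two embeddings give isomorphic
edge-sums, and in any embedding each image (red) triangle uses exactly one vertex from each
of the three original (black) triangles. -/
theorem three_c3_uniquely_embeddable :
    (∃ σ : Equiv.Perm (Fin 3 × ZMod 3), IsGraphEmbedding (Triangles 3) σ) ∧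
    (∀ σ₁ σ₂ : Equiv.Perm (Fin 3 × ZMod 3),
      IsGraphEmbedding (Triangles 3) σ₁ → IsGraphEmbedding (Triangles 3) σ₂ →
      Nonempty (EdgeSum (Triangles 3) σ₁ ≃g EdgeSum (Triangles 3) σ₂)) ∧
    (∀ σ : Equiv.Perm (Fin 3 × ZMod 3), IsGraphEmbedding (Triangles 3) σ →
      ∀ i j : Fin 3, ∃! a : ZMod 3, (σ (i, a)).1 = j) := by
  refine ⟨?_, ?_, ?_⟩
  · -- explicit embedding
    refine ⟨Equiv.ofBijective (fun v => (v.1 + Fin.ofNat 3 v.2.val, v.2)) (by decide), ?_⟩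
    intro x y hxy
    simp only [Equiv.ofBijective_apply]
    revert hxy
    revert x y
    decide
  · intro σ₁ σ₂ h₁ h₂
    obtain ⟨e₁⟩ := iso_rook h₁
    obtain ⟨e₂⟩ := iso_rook h₂
    exact ⟨e₁.trans e₂.symm⟩
  · intro σ h i j
    have hinj : Function.Injective (fun a : ZMod 3 => (σ (i, a)).1) := by
      intro a b hab
      by_contra hne
      exact keyA h (i, a) (i, b) rfl (fun e => hne (congrArg Prod.snd e)) hab
    have hbij : Function.Bijective (fun a : ZMod 3 => (σ (i, a)).1) :=
      (Fintype.bijective_iff_injective_and_card _).2 ⟨hinj, by simp⟩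
    obtain ⟨a, ha⟩ := hbij.surjective j
    exact ⟨a, ha, fun b hb => hinj (hb.trans ha.symm)⟩
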